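/- Let τ be an M-topology on M : X → ℕ and let A, B : X → ℕ be sub-M-sets of M. Then the interior of the intersection equals the intersection of the interiors: int(A ∩ B) = int(A) ∩ int(B), i.e., for every x ∈ X, int(A ∩ B)(x) = min(int(A)(x), int(B)(x)). -/
import Mathlib


/-- M-complement of a sub-M-set: `Aᶜ = M ⊖ A` (pointwise truncated subtraction). -/
def mcompl {X : Type*} (M A : X → ℕ) : X → ℕ := fun x => M x - A x

/-- `τ` is an M-topology on the multiset `M : X → ℕ`. -/
structure IsMTopology {X : Type*} (M : X → ℕ) (τ : Set (X → ℕ)) : Prop where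
  le_of_mem : ∀ N ∈ τ, N ≤ M
  top_mem : M ∈ τ
  zero_mem : (0 : X → ℕ) ∈ τ
  sSup_mem : ∀ S ⊆ τ, (fun x => sSup {n | ∃ N ∈ S, N x = n}) ∈ τ
  min_mem : ∀ U ∈ τ, ∀ V ∈ τ, (fun x => min (U x) (V x)) ∈ τ

/-- Interior: pointwise supremum of all open `G ∈ τ` with `G ≤ A`. -/
noncomputable def mint {X : Type*} (τ : Set (X → ℕ)) (A : X → ℕ) : X → ℕ :=
  fun x => sSup {n | ∃ G ∈ τ, G ≤ A ∧ G x = n}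

/-- Closure: pointwise infimum of all closed `K` with `A ≤ K ≤ M`. -/
noncomputable def mcl {X : Type*} (M : X → ℕ) (τ : Set (X → ℕ)) (A : X → ℕ) : X → ℕ :=
  fun x => sInf {n | ∃ K, mcompl M K ∈ τ ∧ A ≤ K ∧ K ≤ M ∧ K x = n}

/-- Exterior: interior of the M-complement. -/
noncomputable def mext {X : Type*} (M : X → ℕ) (τ : Set (X → ℕ)) (A : X → ℕ) : X → ℕ :=
  mint τ (mcompl M A)

/-- Boundary: `bd(A) = cl(A) ∩ cl(Aᶜ)` (pointwise min). -/
noncomputable def mbd {X : Type*} (M : X → ℕ) (τ : Set (X → ℕ)) (A : X → ℕ) : X → ℕ :=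
  fun x => min (mcl M τ A x) (mcl M τ (mcompl M A) x)

lemma mint_bdd {X : Type*} (τ : Set (X → ℕ)) (A : X → ℕ) (x : X) :
    BddAbove {n | ∃ G ∈ τ, G ≤ A ∧ G x = n} := by
  refine ⟨A x, fun n hn => ?_⟩
  obtain ⟨G, _, hGA, rfl⟩ := hn
  exact hGA x

lemma mint_le {X : Type*} {M : X → ℕ} {τ : Set (X → ℕ)} (hτ : IsMTopology M τ)
    (A : X → ℕ) : mint τ A ≤ A := by
  intro x
  refine csSup_le ⟨0, 0, hτ.zero_mem, fun y => Nat.zero_le _, rfl⟩ ?_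
  rintro n ⟨G, _, hGA, rfl⟩
  exact hGA x

lemma le_mint {X : Type*} {τ : Set (X → ℕ)} {A G : X → ℕ} (hG : G ∈ τ) (hGA : G ≤ A) :
    G ≤ mint τ A := fun x => le_csSup (mint_bdd τ A x) ⟨G, hG, hGA, rfl⟩

lemma mint_mem {X : Type*} {M : X → ℕ} {τ : Set (X → ℕ)} (hτ : IsMTopology M τ)
    (A : X → ℕ) : mint τ A ∈ τ := by
  have h := hτ.sSup_mem {G | G ∈ τ ∧ G ≤ A} (fun G hG => hG.1)
  convert h using 2 with x
  unfold mint
  congr 1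
  ext n
  constructor
  · rintro ⟨G, hG, hGA, rfl⟩; exact ⟨G, ⟨hG, hGA⟩, rfl⟩
  · rintro ⟨G, ⟨hG, hGA⟩, rfl⟩; exact ⟨G, hG, hGA, rfl⟩

theorem int_inter {X : Type*} (M : X → ℕ) (τ : Set (X → ℕ)) (hτ : IsMTopology M τ)
    (A B : X → ℕ) (hA : A ≤ M) (hB : B ≤ M) :
    ∀ x, mint τ (fun y => min (A y) (B y)) x = min (mint τ A x) (mint τ B x) := by
  intro x
  apply le_antisymm
  · have hint := mint_mem hτ (fun y => min (A y) (B y))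
    have hle := mint_le hτ (fun y => min (A y) (B y))
    have h1 : mint τ (fun y => min (A y) (B y)) ≤ mint τ A :=
      le_mint hint (fun y => le_trans (hle y) (min_le_left _ _))
    have h2 : mint τ (fun y => min (A y) (B y)) ≤ mint τ B :=
      le_mint hint (fun y => le_trans (hle y) (min_le_right _ _))
    exact le_min (h1 x) (h2 x)
  · have hU : (fun y => min (mint τ A y) (mint τ B y)) ∈ τ :=
      hτ.min_mem _ (mint_mem hτ A) _ (mint_mem hτ B)
    have hUle : (fun y => min (mint τ A y) (mint τ B y)) ≤ fun y => min (A y) (B y) :=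
      fun y => min_le_min (mint_le hτ A y) (mint_le hτ B y)
    exact le_mint hU hUle x
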